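/- Let h̄ > 0 and let h : ℝ → ℝ be a continuously differentiable function with h - h̄ and h_x square integrable, h(x) → h̄ as |x| → ∞, and h(x) > 0 for all x. Then for every x ∈ ℝ, (g/3)·√(β/2)·(h(x) - h̄)²·(2h(x) + h̄) ≤ ∫_ℝ [ (1/2) g (h - h̄)² + (1/4) β g h² h_x² ] dy, for any constants g, β > 0. -/

import Mathlib

open MeasureTheory Filter

set_option maxHeartbeats 1000000

/-- Pointwise estimate of `(g/3)√(β/2)(h-h̄)²(2h+h̄)` by the potential part of the
energy of the modified Serre–Green–Naghdi equations. -/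
theorem pointwise_energy_bound (g β hbar : ℝ) (hg : 0 < g) (hβ : 0 < β)
    (hhbar : 0 < hbar) (h : ℝ → ℝ) (hC1 : ContDiff ℝ 1 h)
    (hint1 : Integrable (fun y => (h y - hbar)^2))
    (hint2 : Integrable (fun y => (deriv h y)^2))
    (hlim : Tendsto h (cocompact ℝ) (nhds hbar))
    (hpos : ∀ x, 0 < h x) :
    ∀ x : ℝ, g/3 * Real.sqrt (β/2) * (h x - hbar)^2 * (2 * h x + hbar) ≤
      ∫ y : ℝ, (1/2 * g * (h y - hbar)^2 + 1/4 * β * g * (h y)^2 * (deriv h y)^2) := by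
  intro x
  set c : ℝ := Real.sqrt (β/2) with hc_def
  have hc2 : c^2 = β/2 := Real.sq_sqrt (by positivity)
  have hc0 : 0 ≤ c := Real.sqrt_nonneg _
  have hd : ∀ y, HasDerivAt h (deriv h y) y :=
    fun y => (hC1.differentiable one_ne_zero y).hasDerivAt
  have hdc : Continuous (deriv h) := hC1.continuous_deriv le_rfl
  -- boundedness of h
  obtain ⟨M, hM0, hM⟩ : ∃ M, 0 ≤ M ∧ ∀ y, |h y| ≤ M := by
    have h1 : {y | |h y| ≤ |hbar| + 1} ∈ cocompact ℝ := by
      have h2 : Metric.closedBall hbar 1 ∈ nhds hbar := Metric.closedBall_mem_nhds hbar one_pos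
      filter_upwards [hlim h2] with y hy
      have : |h y - hbar| ≤ 1 := by simpa [Real.dist_eq] using hy
      have := abs_sub_abs_le_abs_sub (h y) hbar
      linarith
    obtain ⟨K, hK, hKc⟩ := mem_cocompact.mp h1
    obtain ⟨C, hC⟩ := hK.exists_bound_of_continuousOn hC1.continuous.continuousOn
    refine ⟨max (max C (|hbar| + 1)) 0, le_max_right _ _, fun y => ?_⟩
    by_cases hy : y ∈ K
    · have := hC y hy
      simp only [Real.norm_eq_abs] at this
      exact le_trans this (le_trans (le_max_left _ _) (le_max_left _ _))
    · have := hKc hy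
      exact le_trans this (le_trans (le_max_right _ _) (le_max_left _ _))
  -- integrability of h² h'²
  have hint3 : Integrable (fun y => (h y)^2 * (deriv h y)^2) := by
    refine (hint2.const_mul (M^2)).mono' ?_ ?_
    · exact ((hC1.continuous.pow 2).mul (hdc.pow 2)).aestronglyMeasurable
    · refine Filter.Eventually.of_forall fun y => ?_
      have h1 := hM y
      have h2 : (h y)^2 ≤ M^2 := by nlinarith [abs_nonneg (h y), sq_abs (h y)]
      have h3 : (0:ℝ) ≤ (deriv h y)^2 := sq_nonneg _
      rw [Real.norm_eq_abs, abs_of_nonneg (by positivity)]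
      nlinarith
  -- the flux function and its derivative
  set Φ : ℝ → ℝ := fun y => (h y - hbar) * (h y * deriv h y) with hΦ_def
  set F : ℝ → ℝ := fun y => 1/6 * ((h y - hbar)^2 * (2 * h y + hbar)) with hF_def
  have hF : ∀ y, HasDerivAt F (Φ y) y := by
    intro y
    have H := ((((hd y).sub_const hbar).pow 2).mul (((hd y).const_mul 2).add_const hbar)).const_mul (1/6)
    refine H.congr_deriv ?_
    simp only [hΦ_def, Nat.cast_ofNat, Pi.pow_apply, Nat.reduceSub, pow_one]
    ring
  -- integrability of Φ
  have hΦint : Integrable Φ := by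
    refine ((hint1.const_mul (1/2)).add (hint3.const_mul (1/2))).mono' ?_ ?_
    · exact ((hC1.continuous.sub continuous_const).mul
        (hC1.continuous.mul hdc)).aestronglyMeasurable
    · refine Filter.Eventually.of_forall fun y => ?_
      rw [Real.norm_eq_abs, abs_mul]
      simp only [Pi.add_apply]
      nlinarith [sq_nonneg (|h y - hbar| - |h y * deriv h y|), abs_nonneg (h y - hbar),
        abs_nonneg (h y * deriv h y), sq_abs (h y - hbar), sq_abs (h y * deriv h y),
        mul_pow (h y) (deriv h y) 2]
  -- limits of F at ±∞
  have hFlim : Tendsto F (cocompact ℝ) (nhds 0) := by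
    have hk : Continuous (fun t : ℝ => 1/6 * ((t - hbar)^2 * (2 * t + hbar))) := by continuity
    have := (hk.tendsto hbar).comp hlim
    rw [show (0:ℝ) = 1/6 * ((hbar - hbar)^2 * (2 * hbar + hbar)) by ring]
    exact this
  -- fundamental theorem of calculus on the two half-lines
  have hIic : ∫ y in Set.Iic x, Φ y = F x - 0 :=
    integral_Iic_of_hasDerivAt_of_tendsto' (fun y _ => hF y) hΦint.integrableOn
      (hFlim.mono_left atBot_le_cocompact)
  have hIoi : ∫ y in Set.Ioi x, Φ y = 0 - F x :=
    integral_Ioi_of_hasDerivAt_of_tendsto' (fun y _ => hF y) hΦint.integrableOn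
      (hFlim.mono_left atTop_le_cocompact)
  -- the energy density
  set E : ℝ → ℝ := fun y => 1/2 * g * (h y - hbar)^2 + 1/4 * β * g * (h y)^2 * (deriv h y)^2
    with hE_def
  have hEint : Integrable E := by
    have := (hint1.const_mul (1/2 * g)).add (hint3.const_mul (1/4 * β * g))
    exact this.congr (Filter.Eventually.of_forall fun y => by simp [hE_def]; ring)
  -- pointwise Young inequality
  have hpt : ∀ y, g * c * |Φ y| ≤ E y := by
    intro y
    have key : c * |Φ y| ≤ 1/2 * (h y - hbar)^2 + 1/4 * β * ((h y)^2 * (deriv h y)^2) := by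
      rw [hΦ_def, abs_mul]
      nlinarith [sq_nonneg (|h y - hbar| - c * |h y * deriv h y|), abs_nonneg (h y - hbar),
        abs_nonneg (h y * deriv h y), sq_abs (h y - hbar), sq_abs (h y * deriv h y),
        mul_pow (h y) (deriv h y) 2, mul_nonneg hc0 (abs_nonneg (h y * deriv h y))]
    have := mul_le_mul_of_nonneg_left key hg.le
    simp only [hE_def]
    nlinarith [this]
  -- bound the two half-line integrals
  have h1 : g * c * ∫ y in Set.Iic x, Φ y ≤ ∫ y in Set.Iic x, E y := by
    rw [← integral_const_mul]
    refine setIntegral_mono_on ((hΦint.const_mul (g*c)).integrableOn) hEint.integrableOn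
      measurableSet_Iic fun y _ => ?_
    calc g * c * Φ y ≤ g * c * |Φ y| :=
          mul_le_mul_of_nonneg_left (le_abs_self _) (mul_nonneg hg.le hc0)
      _ ≤ E y := hpt y
  have h2 : -(g * c * ∫ y in Set.Ioi x, Φ y) ≤ ∫ y in Set.Ioi x, E y := by
    rw [← neg_mul, ← integral_const_mul]
    refine setIntegral_mono_on ((hΦint.const_mul (-(g*c))).integrableOn) hEint.integrableOn
      measurableSet_Ioi fun y _ => ?_
    calc -(g * c) * Φ y = g * c * (-Φ y) := by ring
      _ ≤ g * c * |Φ y| :=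
          mul_le_mul_of_nonneg_left (neg_le_abs _) (mul_nonneg hg.le hc0)
      _ ≤ E y := hpt y
  have hsplit : (∫ y in Set.Iic x, E y) + (∫ y in Set.Ioi x, E y) = ∫ y, E y :=
    intervalIntegral.integral_Iic_add_Ioi hEint.integrableOn hEint.integrableOn
  have hkey : g/3 * c * (h x - hbar)^2 * (2 * h x + hbar)
      = g * c * (∫ y in Set.Iic x, Φ y) - g * c * (∫ y in Set.Ioi x, Φ y) := by
    rw [hIic, hIoi, hF_def]
    ring
  rw [hkey]
  linarith
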